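/- In linear temporal logic over ℕ with the valuation π(p) = {n | n ≡ 1 mod 2} and π(q) = {n | n ≡ 0 mod 4}, neither the formula p U q (until) nor p W q (weak until) is semantically equivalent, under this valuation, to any formula built from p, q using ¬, ∨, and the future modality F. Specifically, the truth set of p U q (and of p W q) under this valuation does not lie in the family {⟦¬(p∨q)⟧, ⟦p⟧, ⟦p∨q⟧, ℕ, ⟦¬q⟧, ⟦¬p⟧, ⟦q⟧, ∅}, while every F-only formula (no X, U, W) has its truth set in this family. -/

import Mathlib

namespace Stmt4

inductive Form : Type
  | p : Form
  | q : Form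
  | neg : Form → Form
  | or  : Form → Form → Form
  | F   : Form → Form

def valP (n : ℕ) : Prop := n % 2 = 1
def valQ (n : ℕ) : Prop := n % 4 = 0

def Sat : Form → ℕ → Prop
  | .p, n => valP n
  | .q, n => valQ n
  | .neg φ, n => ¬ Sat φ n
  | .or φ ψ, n => Sat φ n ∨ Sat ψ n
  | .F φ, n => ∃ m, n ≤ m ∧ Sat φ m

def truthSet (φ : Form) : Set ℕ := {n | Sat φ n}

def untilSet : Set ℕ :=
  {n | ∃ m, n ≤ m ∧ valQ m ∧ ∀ i, n ≤ i → i < m → valP i}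

def weakUntilSet : Set ℕ :=
  {n | ∀ m, n ≤ m → ¬ valP m →
      ∃ m', n ≤ m' ∧ valQ m' ∧ ∀ i, n ≤ i → i < m' → valP i}

def theFamily : Set (Set ℕ) :=
  { {n | ¬ (valP n ∨ valQ n)}, {n | valP n}, {n | valP n ∨ valQ n}, Set.univ,
    {n | ¬ valQ n}, {n | ¬ valP n}, {n | valQ n}, ∅ }

def tri (a b c : Bool) : Set ℕ :=
  {n | (a = true ∧ valP n) ∨ (b = true ∧ valQ n) ∨ (c = true ∧ ¬ valP n ∧ ¬ valQ n)}

lemma tri_mem_family (a b c : Bool) : tri a b c ∈ theFamily := by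
  have hqp : ∀ n : ℕ, n % 4 = 0 → ¬ n % 2 = 1 := by intro n; omega
  cases a <;> cases b <;> cases c <;>
    simp only [theFamily, Set.mem_insert_iff, Set.mem_singleton_iff] <;>
  [ skip; skip; skip; skip; skip; skip; skip; skip ]
  · exact .inr (.inr (.inr (.inr (.inr (.inr (.inr (by ext n; simp [tri])))))))
  · refine .inl ?_
    ext n; simp [tri, valP, valQ] <;> omega
  · exact .inr (.inr (.inr (.inr (.inr (.inr (.inl (by ext n; simp [tri])))))))
  · refine .inr (.inr (.inr (.inr (.inr (.inl ?_)))))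
    ext n; simp [tri, valP, valQ] <;> omega
  · exact .inr (.inl (by ext n; simp [tri]))
  · refine .inr (.inr (.inr (.inr (.inl ?_))))
    ext n; simp [tri, valP, valQ] <;> omega
  · refine .inr (.inr (.inl ?_))
    ext n; simp [tri]
  · refine .inr (.inr (.inr (.inl ?_)))
    ext n; simp [tri, valP, valQ] <;> omega

lemma main : ∀ φ : Form, ∃ a b c : Bool, truthSet φ = tri a b c := by
  intro φ
  induction φ with
  | p => exact ⟨true, false, false, by ext n; simp [truthSet, Sat, tri]⟩
  | q => exact ⟨false, true, false, by ext n; simp [truthSet, Sat, tri]⟩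
  | neg φ ih =>
    obtain ⟨a, b, c, h⟩ := ih
    refine ⟨!a, !b, !c, ?_⟩
    have : truthSet (.neg φ) = (truthSet φ)ᶜ := rfl
    rw [this, h]
    ext n
    by_cases h2 : n % 2 = 1 <;> by_cases h4 : n % 4 = 0
    · omega
    all_goals cases a <;> cases b <;> cases c <;> simp_all [tri, valP, valQ]
  | or φ ψ ih1 ih2 =>
    obtain ⟨a, b, c, h1⟩ := ih1
    obtain ⟨a', b', c', h2⟩ := ih2
    refine ⟨a || a', b || b', c || c', ?_⟩
    have : truthSet (.or φ ψ) = truthSet φ ∪ truthSet ψ := rfl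
    rw [this, h1, h2]
    ext n
    simp [tri, Bool.or_eq_true]
    tauto
  | F φ ih =>
    obtain ⟨a, b, c, h⟩ := ih
    have hset : ∀ m : ℕ, Sat φ m ↔ m ∈ tri a b c := fun m => by
      rw [← h]; rfl
    by_cases hall : a = false ∧ b = false ∧ c = false
    · refine ⟨false, false, false, ?_⟩
      obtain ⟨ha, hb, hc⟩ := hall
      subst ha hb hc
      ext n
      simp only [truthSet, Sat, Set.mem_setOf_eq, tri]
      constructor
      · rintro ⟨m, _, hm⟩
        rw [hset] at hm
        simp [tri] at hm
      · simp
    · refine ⟨true, true, true, ?_⟩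
      ext n
      simp only [truthSet, Sat, Set.mem_setOf_eq]
      constructor
      · intro _
        simp [tri]
        by_cases h2 : n % 2 = 1 <;> by_cases h4 : n % 4 = 0 <;> [omega; tauto; tauto; tauto]
      · intro _
        rcases Bool.eq_false_or_eq_true a with ha | ha
        · refine ⟨2 * n + 1, by omega, ?_⟩
          rw [hset]
          exact .inl ⟨ha, by simp [valP]⟩
        · rcases Bool.eq_false_or_eq_true b with hb | hb
          · refine ⟨4 * n, by omega, ?_⟩
            rw [hset]
            exact .inr (.inl ⟨hb, by simp [valQ]⟩)
          · have hc : c = true := by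
              rcases Bool.eq_false_or_eq_true c with hc | hc
              · exact hc
              · exact absurd ⟨ha, hb, hc⟩ hall
            refine ⟨4 * n + 2, by omega, ?_⟩
            rw [hset]
            refine .inr (.inr ⟨hc, ?_, ?_⟩) <;> simp [valP, valQ] <;> omega

lemma zero_mem_until : (0 : ℕ) ∈ untilSet :=
  ⟨0, le_refl 0, by simp [valQ], fun i _ h => by omega⟩

lemma three_mem_until : (3 : ℕ) ∈ untilSet :=
  ⟨4, by omega, by simp [valQ], fun i h1 h2 => by
    interval_cases i <;> simp [valP]⟩

lemma one_not_mem_until : (1 : ℕ) ∉ untilSet := by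
  rintro ⟨m, h1, h2, h3⟩
  simp [valQ] at h2
  have hm : 4 ≤ m := by omega
  have := h3 2 (by omega) (by omega)
  simp [valP] at this

lemma zero_mem_weak : (0 : ℕ) ∈ weakUntilSet :=
  fun m _ _ => zero_mem_until

lemma three_mem_weak : (3 : ℕ) ∈ weakUntilSet :=
  fun m _ _ => three_mem_until

lemma one_not_mem_weak : (1 : ℕ) ∉ weakUntilSet := by
  intro h
  exact one_not_mem_until (h 2 (by omega) (by simp [valP]))

lemma not_mem_family (S : Set ℕ) (h0 : 0 ∈ S) (h3 : 3 ∈ S) (h1 : 1 ∉ S) :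
    S ∉ theFamily := by
  intro hS
  simp only [theFamily, Set.mem_insert_iff, Set.mem_singleton_iff] at hS
  rcases hS with h | h | h | h | h | h | h | h <;> rw [h] at h0 h3 h1 <;>
    simp [valP, valQ] at h0 h3 h1

theorem until_undefinable_from_F :
    (∀ φ : Form, truthSet φ ∈ theFamily) ∧
    untilSet ∉ theFamily ∧ weakUntilSet ∉ theFamily := by
  refine ⟨fun φ => ?_, ?_, ?_⟩
  · obtain ⟨a, b, c, h⟩ := main φ
    rw [h]; exact tri_mem_family a b c
  · exact not_mem_family _ zero_mem_until three_mem_until one_not_mem_until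
  · exact not_mem_family _ zero_mem_weak three_mem_weak one_not_mem_weak

end Stmt4
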